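/- For every free ℤ-set A with finitely many orbits, the category 𝒞′_A is connected: it is nonempty, and any two of its objects can be joined by a finite zigzag of morphisms. -/

import Mathlib

open CategoryTheory

structure ParacyclicZSet where
  carrier : Type
  [linOrd : LinearOrder carrier]
  [addAction : AddAction ℤ carrier]
  free : ∀ (n : ℤ) (b : carrier), n +ᵥ b = b → n = 0
  finOrbits : Finite (Quotient (AddAction.orbitRel ℤ carrier))
  lt_one_vadd : ∀ b : carrier, b < (1 : ℤ) +ᵥ b
  one_vadd_mono : Monotone (fun b : carrier => (1 : ℤ) +ᵥ b)
  cofinal : ∀ b b' : carrier, ∃ n : ℤ, b' ≤ n +ᵥ b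

attribute [instance] ParacyclicZSet.linOrd ParacyclicZSet.addAction

instance : Category ParacyclicZSet where
  Hom B C := {g : B.carrier → C.carrier //
    (∀ (n : ℤ) (b : B.carrier), g (n +ᵥ b) = n +ᵥ g b) ∧ Monotone g}
  id B := ⟨id, fun _ _ => rfl, monotone_id⟩
  comp f g := ⟨g.1 ∘ f.1, fun n b => by
      simp only [Function.comp_apply, f.2.1, g.2.1], g.2.2.comp f.2.2⟩
  id_comp f := Subtype.ext rfl
  comp_id f := Subtype.ext rfl
  assoc f g h := Subtype.ext rfl

/-- An object of the category `𝒞_A`: an object `B` of `Λ∞` together with a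
`ℤ`-equivariant map `f : A → B`. -/
structure CObj (A : Type) [AddAction ℤ A] where
  B : ParacyclicZSet
  f : A → B.carrier
  equivariant : ∀ (n : ℤ) (a : A), f (n +ᵥ a) = n +ᵥ f a

instance (A : Type) [AddAction ℤ A] : Category (CObj A) where
  Hom x y := {g : x.B ⟶ y.B // g.1 ∘ x.f = y.f}
  id x := ⟨𝟙 x.B, rfl⟩
  comp {x y z} g h := ⟨g.1 ≫ h.1, by
    show h.1.1 ∘ (g.1.1 ∘ x.f) = z.f
    rw [g.2, h.2]⟩
  id_comp f := Subtype.ext (Category.id_comp f.1)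
  comp_id f := Subtype.ext (Category.comp_id f.1)
  assoc f g h := Subtype.ext (Category.assoc f.1 g.1 h.1)

/-- The category `𝒞′_A`: the full subcategory of `𝒞_A` spanned by the `(B, f)` with `f`
surjective. -/
abbrev CSurj (A : Type) [AddAction ℤ A] : Type 1 :=
  CategoryTheory.ObjectProperty.FullSubcategory (fun x : CObj A => Function.Surjective x.f)

namespace CsurjAux


lemma vadd_cancel' (B : ParacyclicZSet) (n : ℤ) (b : B.carrier) : (-n) +ᵥ (n +ᵥ b) = b := by
  rw [← add_vadd]; simp

lemma natCast_vadd_mono (B : ParacyclicZSet) (i : ℕ) :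
    Monotone (fun b : B.carrier => (i : ℤ) +ᵥ b) := by
  induction i with
  | zero => intro a b h; simpa using h
  | succ k ih =>
    intro a b h
    have h2 : ((k:ℤ)+1) +ᵥ a ≤ ((k:ℤ)+1) +ᵥ b := by
      rw [add_comm, add_vadd, add_vadd]
      exact B.one_vadd_mono (ih h)
    simpa [Nat.cast_succ] using h2

lemma natCast_vadd_strictMono (B : ParacyclicZSet) (i : ℕ) :
    StrictMono (fun b : B.carrier => (i : ℤ) +ᵥ b) :=
  (natCast_vadd_mono B i).strictMono_of_injective (fun a b h => by
    have h2 := congrArg (fun x => (-(i:ℤ)) +ᵥ x) h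
    simpa [← add_vadd] using h2)

lemma vadd_mono (B : ParacyclicZSet) (n : ℤ) : Monotone (fun b : B.carrier => n +ᵥ b) := by
  intro a b h
  rcases Int.natAbs_eq n with hn | hn
  · have h2 := natCast_vadd_mono B n.natAbs h; rwa [← hn] at h2
  · by_contra hc
    push_neg at hc
    have h2 := natCast_vadd_strictMono B n.natAbs hc
    rw [show ((n.natAbs : ℤ)) = -n from by omega] at h2
    simp only [← add_vadd, neg_add_cancel, zero_vadd] at h2
    exact absurd h2 (not_lt.mpr h)

lemma lt_succ_vadd (B : ParacyclicZSet) (b : B.carrier) :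
    ∀ i : ℕ, b < ((i:ℤ) + 1) +ᵥ b := by
  intro i
  induction i with
  | zero => simpa using B.lt_one_vadd b
  | succ j ih =>
    have h2 := B.lt_one_vadd (((j:ℤ)+1) +ᵥ b)
    rw [← add_vadd, show (1 + ((j:ℤ)+1)) = ((j+1:ℕ):ℤ)+1 from by push_cast; ring] at h2
    exact ih.trans h2

lemma lt_vadd_of_pos (B : ParacyclicZSet) {k : ℤ} (hk : 0 < k) (b : B.carrier) :
    b < k +ᵥ b := by
  have h := lt_succ_vadd B b (k-1).toNat
  rwa [show (((k-1).toNat:ℤ)+1) = k from by omega] at h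

lemma vadd_strictMono (B : ParacyclicZSet) (n : ℤ) :
    StrictMono (fun b : B.carrier => n +ᵥ b) :=
  (vadd_mono B n).strictMono_of_injective (fun a b h => by
    have h2 := congrArg (fun x => (-n) +ᵥ x) h
    simpa [← add_vadd] using h2)

lemma vadd_lt_vadd_of_lt (B : ParacyclicZSet) {n m : ℤ} (h : n < m) (b : B.carrier) :
    n +ᵥ b < m +ᵥ b := by
  have h1 : b < (m - n) +ᵥ b := lt_vadd_of_pos B (by omega) b
  have h2 := vadd_strictMono B n h1
  simp only at h2
  rwa [← add_vadd, show n + (m - n) = m from by ring] at h2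

lemma vadd_le_cancel_int (B : ParacyclicZSet) {n m : ℤ} (b : B.carrier)
    (h : n +ᵥ b ≤ m +ᵥ b) : n ≤ m := by
  by_contra hc
  push_neg at hc
  exact absurd h (not_le.mpr (vadd_lt_vadd_of_lt B hc b))

lemma cofinal_down (B : ParacyclicZSet) (b b' : B.carrier) : ∃ n : ℤ, n +ᵥ b ≤ b' := by
  obtain ⟨m, hm⟩ := B.cofinal b' b
  refine ⟨-m, ?_⟩
  have h := vadd_mono B (-m) hm
  simpa [← add_vadd] using h

lemma exists_floor (B : ParacyclicZSet) (b₀ : B.carrier) :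
    ∃ g : B.carrier → ℤ, (∀ (n : ℤ) (b : B.carrier), g (n +ᵥ b) = n + g b) ∧ Monotone g := by
  have key : ∀ b : B.carrier, ∃ ub : ℤ, (ub +ᵥ b₀ ≤ b) ∧ ∀ z : ℤ, z +ᵥ b₀ ≤ b → z ≤ ub := by
    intro b
    have hbdd : ∃ N : ℤ, ∀ z : ℤ, z +ᵥ b₀ ≤ b → z ≤ N := by
      obtain ⟨N, hN⟩ := B.cofinal b₀ b
      exact ⟨N, fun z hz => vadd_le_cancel_int B b₀ (hz.trans hN)⟩
    exact Int.exists_greatest_of_bdd hbdd (cofinal_down B b₀ b)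
  choose g hg1 hg2 using key
  refine ⟨g, fun n b => ?_, fun b b' hbb => hg2 b' _ ((hg1 b).trans hbb)⟩
  have hle : n + g b ≤ g (n +ᵥ b) := by
    refine hg2 (n +ᵥ b) _ ?_
    have h := vadd_mono B n (hg1 b)
    simpa [← add_vadd] using h
  have hge : g (n +ᵥ b) - n ≤ g b := by
    refine hg2 b _ ?_
    have h := vadd_mono B (-n) (hg1 (n +ᵥ b))
    simp only [← add_vadd] at h
    rwa [show -n + g (n +ᵥ b) = g (n +ᵥ b) - n from by ring,
      show -n + n = 0 from by ring, zero_vadd] at h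
  omega



/-- `ℤ` with the translation action, as a paracyclic `ℤ`-set. -/
def ZP : ParacyclicZSet where
  carrier := ℤ
  addAction :=
    { vadd := fun n m => n + m
      zero_vadd := fun m => zero_add m
      add_vadd := fun a b c => by show a + b + c = a + (b + c); ring }
  free := fun n b h => by have h' : n + b = b := h; omega
  finOrbits := by
    haveI : Subsingleton (Quotient (AddAction.orbitRel ℤ ℤ)) := by
      constructor
      intro q q'
      induction q using Quotient.ind
      induction q' using Quotient.ind
      rename_i a b
      exact Quotient.sound ⟨a - b, by show a - b + b = a; ring⟩
    exact Finite.of_subsingleton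
  lt_one_vadd := fun b => by show b < 1 + b; omega
  one_vadd_mono := fun a b h => by show 1 + a ≤ 1 + b; omega
  cofinal := fun b b' => ⟨b' - b, by show b' ≤ b' - b + b; omega⟩

variable {A : Type} [AddAction ℤ A]

lemma zsurj (a₀ : A) (h : A → ℤ) (hh : ∀ (n : ℤ) (a : A), h (n +ᵥ a) = n + h a) :
    Function.Surjective h := fun m => ⟨(m - h a₀) +ᵥ a₀, by rw [hh]; ring⟩

/-- The object of `𝒞′_A` given by an equivariant map `h : A → ℤ`. -/
def zobjC (a₀ : A) (h : A → ℤ) (hh : ∀ (n : ℤ) (a : A), h (n +ᵥ a) = n + h a) : CSurj A :=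
  ⟨⟨ZP, h, fun n a => hh n a⟩, zsurj a₀ h hh⟩

lemma zobjC_congr (a₀ : A) {h h' : A → ℤ} (hh : ∀ (n : ℤ) (a : A), h (n +ᵥ a) = n + h a)
    (hh' : ∀ (n : ℤ) (a : A), h' (n +ᵥ a) = n + h' a) (e : h = h') :
    zobjC a₀ h hh = zobjC a₀ h' hh' := by subst e; rfl

/-- The `ℤ`-action "by doubled translation" on the range of `s`. -/
def midAct (s : A → ℤ) (hs : ∀ (n : ℤ) (a : A), s (n +ᵥ a) = s a + 2*n) :
    AddAction ℤ {m : ℤ // ∃ a, s a = m} where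
  vadd := fun n x => ⟨x.1 + 2*n, by
    obtain ⟨a, ha⟩ := x.2
    exact ⟨n +ᵥ a, by rw [hs, ha]⟩⟩
  zero_vadd := fun x => Subtype.ext (by show x.1 + 2*0 = x.1; ring)
  add_vadd := fun n m x => Subtype.ext (by show x.1 + 2*(n+m) = x.1 + 2*m + 2*n; ring)

lemma midFin (s : A → ℤ) (hs : ∀ (n : ℤ) (a : A), s (n +ᵥ a) = s a + 2*n)
    (hA : Finite (Quotient (AddAction.orbitRel ℤ A))) :
    Finite (@Quotient _ (@AddAction.orbitRel ℤ _ _ (midAct s hs))) := by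
  letI := midAct s hs
  haveI := hA
  refine Finite.of_surjective (α := Quotient (AddAction.orbitRel ℤ A))
    (Quotient.lift (fun a => Quotient.mk (AddAction.orbitRel ℤ {m : ℤ // ∃ a, s a = m})
      (⟨s a, a, rfl⟩ : {m : ℤ // ∃ a, s a = m})) ?_) ?_
  · intro a b hab
    obtain ⟨n, hn⟩ := hab
    refine Quotient.sound ⟨n, Subtype.ext ?_⟩
    show s b + 2*n = s a
    rw [← hn, hs]
  · intro q
    obtain ⟨x, rfl⟩ := Quotient.exists_rep q
    obtain ⟨a, ha⟩ := x.2
    exact ⟨Quotient.mk _ a, congrArg _ (Subtype.ext ha)⟩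

/-- The range of a "doubled" equivariant map `s : A → ℤ`, as a paracyclic `ℤ`-set. -/
def midPZ (s : A → ℤ) (hs : ∀ (n : ℤ) (a : A), s (n +ᵥ a) = s a + 2*n)
    (hA : Finite (Quotient (AddAction.orbitRel ℤ A))) : ParacyclicZSet where
  carrier := {m : ℤ // ∃ a, s a = m}
  addAction := midAct s hs
  free := fun n x h => by
    have h' : x.1 + 2*n = x.1 := congrArg Subtype.val h
    omega
  finOrbits := midFin s hs hA
  lt_one_vadd := fun x => Subtype.coe_lt_coe.mp (by show x.1 < x.1 + 2*1; omega)
  one_vadd_mono := fun x y h => Subtype.coe_le_coe.mp (by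
    have h' : x.1 ≤ y.1 := Subtype.coe_le_coe.mpr h
    show x.1 + 2*1 ≤ y.1 + 2*1
    omega)
  cofinal := fun x y => ⟨max 0 (y.1 - x.1), Subtype.coe_le_coe.mp (by
    show y.1 ≤ x.1 + 2 * max 0 (y.1 - x.1)
    omega)⟩

/-- The object of `𝒞′_A` given by a doubled equivariant map `s`. -/
def midObj (s : A → ℤ) (hs : ∀ (n : ℤ) (a : A), s (n +ᵥ a) = s a + 2*n)
    (hA : Finite (Quotient (AddAction.orbitRel ℤ A))) : CSurj A :=
  ⟨⟨midPZ s hs hA, fun a => ⟨s a, a, rfl⟩,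
    fun n a => Subtype.ext (by show s (n +ᵥ a) = s a + 2*n; exact hs n a)⟩,
    fun x => ⟨x.2.choose, Subtype.ext x.2.choose_spec⟩⟩

/-- The empty paracyclic `ℤ`-set. -/
def emptyPZ : ParacyclicZSet where
  carrier := {m : ℤ // False}
  addAction :=
    { vadd := fun _ x => x
      zero_vadd := fun _ => rfl
      add_vadd := fun _ _ _ => rfl }
  free := fun n x _ => x.2.elim
  finOrbits := by
    haveI : IsEmpty {m : ℤ // False} := ⟨fun x => x.2⟩
    exact Finite.of_subsingleton
  lt_one_vadd := fun x => x.2.elim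
  one_vadd_mono := fun x => x.2.elim
  cofinal := fun x => x.2.elim

end CsurjAux

namespace CsurjAux

lemma zigzag_of_hom {C : Type*} [Category C] {X Y : C} (f : X ⟶ Y) : Zigzag X Y :=
  Relation.ReflTransGen.single (Or.inl ⟨f⟩)

variable {A : Type} [AddAction ℤ A]

lemma zig_step (a₀ : A) (hA : Finite (Quotient (AddAction.orbitRel ℤ A)))
    (h h' : A → ℤ) (hh : ∀ (n : ℤ) (a : A), h (n +ᵥ a) = n + h a)
    (hh' : ∀ (n : ℤ) (a : A), h' (n +ᵥ a) = n + h' a)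
    (hle : ∀ a, h a ≤ h' a) (hle2 : ∀ a, h' a ≤ h a + 1) :
    Zigzag (zobjC a₀ h hh) (zobjC a₀ h' hh') := by
  let s : A → ℤ := fun a => h a + h' a
  have hs : ∀ (n : ℤ) (a : A), s (n +ᵥ a) = s a + 2*n := by
    intro n a
    show h (n +ᵥ a) + h' (n +ᵥ a) = h a + h' a + 2*n
    rw [hh, hh']; ring
  let M := midObj s hs hA
  have m1 : M ⟶ zobjC a₀ h hh :=
    ⟨⟨fun x => x.1 / 2,
      fun n x => by show (x.1 + 2*n)/2 = n + x.1/2; omega,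
      fun x y hxy => by
        have hv : x.1 ≤ y.1 := hxy
        show x.1/2 ≤ y.1/2
        omega⟩,
      funext fun a => by
        show (h a + h' a)/2 = h a
        have := hle a; have := hle2 a; omega⟩
  have m2 : M ⟶ zobjC a₀ h' hh' :=
    ⟨⟨fun x => (x.1 + 1) / 2,
      fun n x => by show (x.1 + 2*n + 1)/2 = n + (x.1 + 1)/2; omega,
      fun x y hxy => by
        have hv : x.1 ≤ y.1 := hxy
        show (x.1 + 1)/2 ≤ (y.1 + 1)/2
        omega⟩,
      funext fun a => by
        show (h a + h' a + 1)/2 = h' a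
        have := hle a; have := hle2 a; omega⟩
  exact Relation.ReflTransGen.trans (zigzag_symmetric.symm _ _ (zigzag_of_hom m1)) (zigzag_of_hom m2)

lemma zig_chain (a₀ : A) (hA : Finite (Quotient (AddAction.orbitRel ℤ A)))
    (v : A → ℤ) (hv : ∀ (n : ℤ) (a : A), v (n +ᵥ a) = n + v a) :
    ∀ (T : ℕ) (h : A → ℤ) (hh : ∀ (n : ℤ) (a : A), h (n +ᵥ a) = n + h a),
      (∀ a, h a ≤ v a) → (∀ a, v a ≤ h a + T) →
      Zigzag (zobjC a₀ h hh) (zobjC a₀ v hv) := by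
  intro T
  induction T with
  | zero =>
    intro h hh hle hge
    have e : h = v := funext fun a => le_antisymm (hle a) (by have := hge a; omega)
    rw [zobjC_congr a₀ hh hv e]
  | succ T ih =>
    intro h hh hle hge
    let h₁ : A → ℤ := fun a => min (h a + 1) (v a)
    have hh₁ : ∀ (n : ℤ) (a : A), h₁ (n +ᵥ a) = n + h₁ a := by
      intro n a
      show min (h (n +ᵥ a) + 1) (v (n +ᵥ a)) = n + min (h a + 1) (v a)
      rw [hh, hv]; omega
    have step := zig_step a₀ hA h h₁ hh hh₁
      (fun a => by have := hle a; show h a ≤ min (h a + 1) (v a); omega)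
      (fun a => by show min (h a + 1) (v a) ≤ h a + 1; omega)
    have rest := ih h₁ hh₁
      (fun a => by show min (h a + 1) (v a) ≤ v a; omega)
      (fun a => by
        have := hge a
        show v a ≤ min (h a + 1) (v a) + T
        push_cast at this ⊢
        omega)
    exact Relation.ReflTransGen.trans step rest

lemma bdd_of_invariant (hA : Finite (Quotient (AddAction.orbitRel ℤ A))) (d : A → ℤ)
    (hd : ∀ (n : ℤ) (a : A), d (n +ᵥ a) = d a) : ∃ T : ℕ, ∀ a, d a ≤ T := by
  haveI := hA
  have hwd : ∀ a b : A, (AddAction.orbitRel ℤ A).r a b → d a = d b := by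
    intro a b hab
    obtain ⟨n, hn⟩ := hab
    rw [← hn, hd]
  let D : Quotient (AddAction.orbitRel ℤ A) → ℤ := Quotient.lift d hwd
  obtain ⟨M, hM⟩ := (Set.finite_range D).bddAbove
  refine ⟨M.toNat, fun a => ?_⟩
  have h1 : D (Quotient.mk (AddAction.orbitRel ℤ A) a) ≤ M := hM (Set.mem_range_self _)
  have h2 : D (Quotient.mk (AddAction.orbitRel ℤ A) a) = d a := rfl
  omega

lemma zig_any (a₀ : A) (hA : Finite (Quotient (AddAction.orbitRel ℤ A)))
    (h₁ h₂ : A → ℤ) (hh₁ : ∀ (n : ℤ) (a : A), h₁ (n +ᵥ a) = n + h₁ a)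
    (hh₂ : ∀ (n : ℤ) (a : A), h₂ (n +ᵥ a) = n + h₂ a) :
    Zigzag (zobjC a₀ h₁ hh₁) (zobjC a₀ h₂ hh₂) := by
  let v : A → ℤ := fun a => max (h₁ a) (h₂ a)
  have hv : ∀ (n : ℤ) (a : A), v (n +ᵥ a) = n + v a := by
    intro n a
    show max (h₁ (n +ᵥ a)) (h₂ (n +ᵥ a)) = n + max (h₁ a) (h₂ a)
    rw [hh₁, hh₂]; omega
  obtain ⟨T₁, hT₁⟩ := bdd_of_invariant hA (fun a => v a - h₁ a)
    (fun n a => by show v (n +ᵥ a) - h₁ (n +ᵥ a) = v a - h₁ a; rw [hv, hh₁]; ring)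
  obtain ⟨T₂, hT₂⟩ := bdd_of_invariant hA (fun a => v a - h₂ a)
    (fun n a => by show v (n +ᵥ a) - h₂ (n +ᵥ a) = v a - h₂ a; rw [hv, hh₂]; ring)
  have c1 := zig_chain a₀ hA v hv T₁ h₁ hh₁ (fun a => le_max_left _ _)
    (fun a => by have := hT₁ a; omega)
  have c2 := zig_chain a₀ hA v hv T₂ h₂ hh₂ (fun a => le_max_right _ _)
    (fun a => by have := hT₂ a; omega)
  exact Relation.ReflTransGen.trans c1 (zigzag_symmetric.symm _ _ c2)

lemma exists_equivariant (hfree : ∀ (n : ℤ) (a : A), n +ᵥ a = a → n = 0) :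
    ∃ h : A → ℤ, ∀ (n : ℤ) (a : A), h (n +ᵥ a) = n + h a := by
  have key : ∀ a : A, ∃ n : ℤ, a = n +ᵥ (Quotient.mk (AddAction.orbitRel ℤ A) a).out := by
    intro a
    obtain ⟨n, hn⟩ := Quotient.mk_out (s := AddAction.orbitRel ℤ A) a
    exact ⟨-n, by rw [← hn, ← add_vadd]; simp⟩
  choose h hh using key
  refine ⟨h, fun n a => ?_⟩
  have e : Quotient.mk (AddAction.orbitRel ℤ A) (n +ᵥ a) = Quotient.mk (AddAction.orbitRel ℤ A) a :=
    Quotient.sound ⟨n, rfl⟩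
  have h1 := hh (n +ᵥ a)
  rw [e] at h1
  have h2 := hh a
  have h1' : (n + h a) +ᵥ (Quotient.mk (AddAction.orbitRel ℤ A) a).out
      = h (n +ᵥ a) +ᵥ (Quotient.mk (AddAction.orbitRel ℤ A) a).out := by
    rw [add_vadd, ← h2]; exact h1
  have h3 := congrArg (fun x => (-(n + h a)) +ᵥ x) h1'
  simp only [← add_vadd] at h3
  rw [show -(n + h a) + (n + h a) = 0 from by ring, zero_vadd] at h3
  have h4 := hfree _ _ h3.symm
  omega

lemma exists_hom_to_z (a₀ : A) (X : CSurj A) :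
    ∃ (h : A → ℤ) (hh : ∀ (n : ℤ) (a : A), h (n +ᵥ a) = n + h a),
      Nonempty (X ⟶ zobjC a₀ h hh) := by
  obtain ⟨g, hg1, hg2⟩ := exists_floor X.obj.B (X.obj.f a₀)
  refine ⟨fun a => g (X.obj.f a), fun n a => by
    show g (X.obj.f (n +ᵥ a)) = n + g (X.obj.f a)
    rw [X.obj.equivariant, hg1], ?_⟩
  exact ⟨⟨⟨g, fun n b => hg1 n b, hg2⟩, rfl⟩⟩

end CsurjAux


open CsurjAux in
/-- For every free `ℤ`-set `A` with finitely many orbits, the category `𝒞′_A` is connected: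
it is nonempty, and any two of its objects can be joined by a finite zigzag of morphisms. -/
theorem csurj_connected (A : Type) [AddAction ℤ A]
    (hfree : ∀ (n : ℤ) (a : A), n +ᵥ a = a → n = 0)
    (hA : Finite (Quotient (AddAction.orbitRel ℤ A))) :
    Nonempty (CSurj A) ∧ ∀ x y : CSurj A, CategoryTheory.Zigzag x y := by
  rcases isEmpty_or_nonempty A with hE | hNE
  · -- A is empty
    have X₀ : CSurj A := ⟨⟨emptyPZ, fun a => (hE.false a).elim, fun n a => (hE.false a).elim⟩,
      fun x => x.2.elim⟩
    refine ⟨⟨X₀⟩, fun X Y => ?_⟩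
    haveI hXe : IsEmpty X.obj.B.carrier :=
      ⟨fun b => (X.property b).elim fun a _ => hE.false a⟩
    exact zigzag_of_hom (X := X) (Y := Y)
      ⟨⟨fun b => isEmptyElim b, fun n b => isEmptyElim b, fun b c _ => isEmptyElim b⟩,
        funext fun a => (hE.false a).elim⟩
  · -- A is nonempty
    obtain ⟨a₀⟩ := hNE
    obtain ⟨h₀, hh₀⟩ := exists_equivariant hfree
    refine ⟨⟨zobjC a₀ h₀ hh₀⟩, fun X Y => ?_⟩
    obtain ⟨hX, hhX, ⟨mX⟩⟩ := exists_hom_to_z a₀ X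
    obtain ⟨hY, hhY, ⟨mY⟩⟩ := exists_hom_to_z a₀ Y
    refine Relation.ReflTransGen.trans (zigzag_of_hom mX)
      (Relation.ReflTransGen.trans (zig_any a₀ hA hX hY hhX hhY)
        (zigzag_symmetric.symm _ _ (zigzag_of_hom mY)))
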